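/- In the category of topological spaces, consider a pushout square with legs f : A → B and g : A → C that are both topological embeddings, with pushout object D and cocone maps b : B → D and c : C → D. Then b and c are topological embeddings, D is covered by their images (every point of D lies in b(B) ∪ c(C)), and the images intersect exactly in the image of A, i.e. b(B) ∩ c(C) = b(f(A)) = c(g(A)). -/

import Mathlib

open CategoryTheory CategoryTheory.Limits Topology

universe u

lemma stmt2_aux_emb {A B C D : TopCat.{u}} (f : A ⟶ B) (g : A ⟶ C) (b : B ⟶ D) (c : C ⟶ D)
    (hf : IsEmbedding f) (hg : IsEmbedding g) (hpo : IsPushout f g b c)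
    (hbinj : Function.Injective b) : IsEmbedding b := by
  refine ⟨⟨le_antisymm (continuous_iff_le_induced.1 b.hom.continuous) ?_⟩, hbinj⟩
  intro U hU
  rw [isOpen_induced_iff]
  -- `U` is open in `B`
  have hfU : IsOpen (⇑f ⁻¹' U) := hU.preimage f.hom.continuous
  rw [hg.eq_induced, isOpen_induced_iff] at hfU
  obtain ⟨W, hW, hWU⟩ := hfU
  -- Sierpinski space
  let S : TopCat.{u} := TopCat.of (ULift.{u} Prop)
  have hcontU : Continuous fun x : B => ULift.up.{u} (x ∈ U) :=
    continuous_uliftUp.comp (isOpen_iff_continuous_mem.1 hU)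
  have hcontW : Continuous fun x : C => ULift.up.{u} (x ∈ W) :=
    continuous_uliftUp.comp (isOpen_iff_continuous_mem.1 hW)
  let χU : B ⟶ S := TopCat.ofHom ⟨fun x => ULift.up (x ∈ U), hcontU⟩
  let χW : C ⟶ S := TopCat.ofHom ⟨fun x => ULift.up (x ∈ W), hcontW⟩
  have hmem : ∀ a : A, (f a ∈ U) ↔ (g a ∈ W) := by
    intro a
    constructor
    · intro h
      have h2 : a ∈ ⇑f ⁻¹' U := h
      rw [← hWU] at h2
      exact h2
    · intro h
      have h2 : a ∈ ⇑g ⁻¹' W := h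
      rw [hWU] at h2
      exact h2
  have hcomm : f ≫ χU = g ≫ χW := by
    ext a
    show (f a ∈ U) ↔ (g a ∈ W)
    exact hmem a
  let h : D ⟶ S := hpo.desc χU χW hcomm
  refine ⟨{d : D | (h d).down}, ?_, ?_⟩
  · exact (continuous_uliftDown.comp h.hom.continuous).isOpen_preimage _ (continuous_Prop.mp continuous_id)
  · ext x
    have : h (b x) = χU x := congrArg (fun (p : B ⟶ S) => p x) (hpo.inl_desc χU χW hcomm)
    simp only [Set.mem_preimage, Set.mem_setOf_eq, this]
    rfl

/-- In `TopCat`, given a pushout square with legs `f : A ⟶ B` and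
`g : A ⟶ C` both topological embeddings, with pushout object `D` and cocone maps
`b : B ⟶ D`, `c : C ⟶ D`, the maps `b` and `c` are topological embeddings, `D` is covered
by their images, and the images intersect exactly in the image of `A`:
`b(B) ∩ c(C) = b(f(A)) = c(g(A))`. -/
theorem stmt2 (A B C D : TopCat) (f : A ⟶ B) (g : A ⟶ C) (b : B ⟶ D) (c : C ⟶ D)
    (hf : IsEmbedding f) (hg : IsEmbedding g) (hpo : IsPushout f g b c) :
    IsEmbedding b ∧ IsEmbedding c ∧
    Set.range b ∪ Set.range c = Set.univ ∧
    Set.range b ∩ Set.range c = ⇑b '' (Set.range f) ∧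
    Set.range b ∩ Set.range c = ⇑c '' (Set.range g) := by
  have hpo' := hpo.map (forget TopCat)
  -- injectivity
  have hmf : Mono ((forget TopCat).map f) := (mono_iff_injective _).2 hf.injective
  have hmg : Mono ((forget TopCat).map g) := (mono_iff_injective _).2 hg.injective
  have hbinj : Function.Injective b :=
    (mono_iff_injective _).1 (Adhesive.mono_of_isPushout_of_mono_right hpo')
  have hcinj : Function.Injective c :=
    (mono_iff_injective _).1 (Adhesive.mono_of_isPushout_of_mono_left hpo')
  -- key set-theoretic fact
  have key : ∀ (x : B) (y : C), b x = c y ↔ ∃ a : A, f a = x ∧ g a = y := by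
    intro x y
    exact Types.pushoutCocone_inl_eq_inr_iff_of_isColimit hpo'.isColimit hf.injective x y
  have hw : ∀ a : A, b (f a) = c (g a) := fun a =>
    ConcreteCategory.congr_hom hpo.w a
  refine ⟨stmt2_aux_emb f g b c hf hg hpo hbinj,
    stmt2_aux_emb g f c b hg hf hpo.flip hcinj, ?_, ?_, ?_⟩
  · ext d
    simp only [Set.mem_union, Set.mem_univ, iff_true]
    obtain ⟨j, y, hy⟩ := Types.jointly_surjective _ hpo'.isColimit d
    rcases j with _ | _ | _
    · left
      refine ⟨f y, ?_⟩
      rw [← hy, PushoutCocone.condition_zero]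
      rfl
    · exact Or.inl ⟨y, hy⟩
    · exact Or.inr ⟨y, hy⟩
  · ext d
    constructor
    · rintro ⟨⟨x, rfl⟩, ⟨y, hy⟩⟩
      obtain ⟨a, rfl, rfl⟩ := (key x y).1 hy.symm
      exact ⟨f a, ⟨a, rfl⟩, rfl⟩
    · rintro ⟨_, ⟨a, rfl⟩, rfl⟩
      exact ⟨⟨f a, rfl⟩, ⟨g a, (hw a).symm⟩⟩
  · ext d
    constructor
    · rintro ⟨⟨x, rfl⟩, ⟨y, hy⟩⟩
      obtain ⟨a, rfl, rfl⟩ := (key x y).1 hy.symm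
      exact ⟨g a, ⟨a, rfl⟩, (hw a).symm⟩
    · rintro ⟨_, ⟨a, rfl⟩, rfl⟩
      exact ⟨⟨f a, hw a⟩, ⟨g a, rfl⟩⟩
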